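/- Suppose a nonnegative measurable function F on a measure space with finite measure μ satisfies, together with a nonnegative g ∈ L^p, the inequality ∫ F^p dμ ≤ (p/(p-1)) ∫ F^{p-1} g dμ + ((k-1)/(p-1)) ∫ g^p dμ, with F ∈ L^p and p > 1, k ≥ 1. Then ‖F‖_p ≤ C_{p,k} ‖g‖_p, where C_{p,k} is the unique root in [1,∞) of (p-1)C^p - pC^{p-1} - (k-1) = 0. -/

import Mathlib

open MeasureTheory

theorem Lp_from_good_inequality
    {X : Type*} [MeasurableSpace X] (μ : Measure X) [IsFiniteMeasure μ]
    (p : ℝ) (hp : 1 < p) (k : ℕ) (hk : 1 ≤ k)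
    (F g : X → ℝ) (hF0 : ∀ x, 0 ≤ F x) (hg0 : ∀ x, 0 ≤ g x)
    (hF : MemLp F (ENNReal.ofReal p) μ) (hg : MemLp g (ENNReal.ofReal p) μ)
    (hineq : ∫ x, F x ^ p ∂μ ≤
      (p / (p - 1)) * ∫ x, F x ^ (p - 1) * g x ∂μ +
        (((k : ℝ) - 1) / (p - 1)) * ∫ x, g x ^ p ∂μ)
    (C : ℝ) (hC : 1 ≤ C)
    (hroot : (p - 1) * C ^ p - p * C ^ (p - 1) - ((k : ℝ) - 1) = 0) :
    (∫ x, F x ^ p ∂μ) ^ (1 / p) ≤ C * (∫ x, g x ^ p ∂μ) ^ (1 / p) := by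
  have hp0 : (0:ℝ) < p := lt_trans one_pos hp
  have hp1 : (0:ℝ) < p - 1 := by linarith
  set I := ∫ x, F x ^ p ∂μ with hI
  set J := ∫ x, g x ^ p ∂μ with hJ
  have hI0 : 0 ≤ I := integral_nonneg fun x => Real.rpow_nonneg (hF0 x) p
  have hJ0 : 0 ≤ J := integral_nonneg fun x => Real.rpow_nonneg (hg0 x) p
  set A := I ^ (1/p) with hA
  set B := J ^ (1/p) with hB
  have hA0 : 0 ≤ A := Real.rpow_nonneg hI0 _
  have hB0 : 0 ≤ B := Real.rpow_nonneg hJ0 _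
  -- Hölder's inequality
  have hpq : (p / (p - 1)).HolderConjugate p := (Real.HolderConjugate.conjExponent hp).symm
  have hFmem : MemLp (fun x => F x ^ (p - 1)) (ENNReal.ofReal (p / (p - 1))) μ := by
    have h := hF.norm_rpow_div (ENNReal.ofReal (p - 1))
    rw [ENNReal.toReal_ofReal hp1.le] at h
    rw [ENNReal.ofReal_div_of_pos hp1]
    refine MemLp.ae_eq (Filter.Eventually.of_forall fun x => ?_) h
    simp only
    rw [Real.norm_of_nonneg (hF0 x)]
  have hHolder : ∫ x, F x ^ (p - 1) * g x ∂μ ≤ I ^ ((p-1)/p) * B := by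
    have h := integral_mul_le_Lp_mul_Lq_of_nonneg hpq
      (Filter.Eventually.of_forall fun x => Real.rpow_nonneg (hF0 x) (p-1))
      (Filter.Eventually.of_forall hg0) hFmem hg
    have heq : ∫ x, (F x ^ (p - 1)) ^ (p / (p-1)) ∂μ = I := by
      refine integral_congr_ae (Filter.Eventually.of_forall fun x => ?_)
      show (F x ^ (p - 1)) ^ (p / (p - 1)) = F x ^ p
      rw [← Real.rpow_mul (hF0 x)]
      congr 1
      field_simp
    rw [heq, one_div_div] at h
    exact h
  -- key inequality
  have hIA : A ^ p = I := by
    rw [hA, ← Real.rpow_mul hI0, one_div, inv_mul_cancel₀ hp0.ne', Real.rpow_one]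
  have hJB : B ^ p = J := by
    rw [hB, ← Real.rpow_mul hJ0, one_div, inv_mul_cancel₀ hp0.ne', Real.rpow_one]
  have hIA' : A ^ (p-1) = I ^ ((p-1)/p) := by
    rw [hA, ← Real.rpow_mul hI0]
    congr 1
    field_simp
  have hkey : (p-1) * A^p ≤ p * A^(p-1) * B + ((k:ℝ)-1) * B^p := by
    have h1 : I ≤ (p / (p - 1)) * (I ^ ((p-1)/p) * B) + (((k : ℝ) - 1) / (p - 1)) * J := by
      refine le_trans hineq (add_le_add_left ?_ _)
      exact mul_le_mul_of_nonneg_left hHolder (div_nonneg hp0.le hp1.le)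
    rw [← hIA', ← hIA, ← hJB] at h1
    have hk1 : (0:ℝ) ≤ (k:ℝ) - 1 := by
      have : (1:ℝ) ≤ (k:ℝ) := by exact_mod_cast hk
      linarith
    rw [div_mul_eq_mul_div, div_mul_eq_mul_div, ← add_div, le_div_iff₀ hp1] at h1
    nlinarith [h1]
  -- now the algebra
  by_contra hcon
  push_neg at hcon
  have hCB0 : 0 ≤ C * B := mul_nonneg (by linarith) hB0
  have hApos : 0 < A := lt_of_le_of_lt hCB0 hcon
  by_cases hBz : B = 0
  · rw [hBz] at hkey
    have : 0 < A ^ p := Real.rpow_pos_of_pos hApos p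
    have h0 : (0:ℝ) ^ p = 0 := Real.zero_rpow hp0.ne'
    rw [h0] at hkey
    nlinarith
  · have hBpos : 0 < B := lt_of_le_of_ne hB0 (Ne.symm hBz)
    -- strict monotonicity of φ on [1, ∞)
    set φ : ℝ → ℝ := fun s => (p - 1) * s ^ p - p * s ^ (p - 1) - ((k : ℝ) - 1) with hφ
    have hmono : StrictMonoOn φ (Set.Ici 1) := by
      refine strictMonoOn_of_deriv_pos (convex_Ici 1) ?_ ?_
      · refine ContinuousOn.sub (ContinuousOn.sub ?_ ?_) continuousOn_const
        · exact continuousOn_const.mul (fun s hs =>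
            (Real.continuousAt_rpow_const s p (Or.inl (by simp at hs; linarith))).continuousWithinAt)
        · exact continuousOn_const.mul (fun s hs =>
            (Real.continuousAt_rpow_const s (p-1) (Or.inl (by simp at hs; linarith))).continuousWithinAt)
      · intro s hs
        rw [interior_Ici] at hs
        have hs1 : (1:ℝ) < s := hs
        have hs0 : (0:ℝ) < s := by linarith
        have hd : HasDerivAt φ ((p-1) * (p * s ^ (p-1)) - p * ((p-1) * s ^ (p-1-1))) s := by
          exact (((Real.hasDerivAt_rpow_const (p := p) (Or.inl hs0.ne')).const_mul (p-1)).sub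
            ((Real.hasDerivAt_rpow_const (p := p-1) (Or.inl hs0.ne')).const_mul p)).sub_const _
        rw [hd.deriv]
        have hlt : s ^ (p-1-1) < s ^ (p-1) := by
          apply Real.rpow_lt_rpow_of_exponent_lt hs1
          linarith
        nlinarith [mul_pos (mul_pos hp0 hp1) (sub_pos.mpr hlt)]
    have hCmem : C ∈ Set.Ici (1:ℝ) := hC
    have htC : C < A / B := (lt_div_iff₀ hBpos).mpr hcon
    have htmem : A / B ∈ Set.Ici (1:ℝ) := le_of_lt (lt_of_le_of_lt hC htC)
    have hφt : 0 < φ (A / B) := by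
      have := hmono hCmem htmem htC
      rw [hφ] at this ⊢
      simp only at this ⊢
      linarith [hroot, this]
    rw [hφ] at hφt
    simp only at hφt
    rw [Real.div_rpow hA0 hB0, Real.div_rpow hA0 hB0] at hφt
    have hBp : 0 < B ^ p := Real.rpow_pos_of_pos hBpos p
    have hBp1 : 0 < B ^ (p-1) := Real.rpow_pos_of_pos hBpos (p-1)
    have hBsplit : B ^ p = B ^ (p-1) * B := by
      have h' : B ^ (p-1) * B ^ (1:ℝ) = B ^ p := by
        rw [← Real.rpow_add hBpos]; norm_num
      rw [Real.rpow_one] at h'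
      exact h'.symm
    have hexp : B ^ p * ((p-1)*(A^p/B^p) - p*(A^(p-1)/B^(p-1)) - ((k:ℝ)-1))
        = (p-1)*A^p - p*A^(p-1)*B - ((k:ℝ)-1)*B^p := by
      rw [hBsplit]
      field_simp
    have h3 : 0 < (p-1)*A^p - p*A^(p-1)*B - ((k:ℝ)-1)*B^p := by
      rw [← hexp]; exact mul_pos hBp hφt
    linarith [hkey, h3]
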